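/- arXiv:0709.1269 — 2 statements merged into one kernel-verified Lean document; each statement's English description precedes it below -/
import Mathlib

section
/- Let Z be a multiaffine real polynomial in y_1,...,y_m with positive coefficients, and let e,f,g be distinct indices. Fix real values of all variables y_c for c ∉ {e,f,g}. Assume ΔZ_f{e,g} ≥ 0 and ΔZ^f{e,g} ≥ 0 (as functions of y_f and the remaining fixed values being irrelevant, i.e., for the given fixed values), and assume ΔZ{e,f} ≥ 0 for all real y_g. Then ΔZ{e,g} ≥ 0 for all real y_f. -/
open MvPolynomial

/-- The deletion `Z^e`: the polynomial `Z` with `y_e` set to `0`. -/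
noncomputable def del {m : ℕ} (e : Fin m) (Z : MvPolynomial (Fin m) ℝ) : MvPolynomial (Fin m) ℝ :=
  aeval (fun i => if i = e then (0 : MvPolynomial (Fin m) ℝ) else X i) Z

/-- Multiaffine: every variable occurs to at most the first power. -/
def Multiaffine {m : ℕ} (Z : MvPolynomial (Fin m) ℝ) : Prop :=
  ∀ e : Fin m, Z.degreeOf e ≤ 1

/-- The Rayleigh difference `ΔZ{e,f} = Z_e Z_f - Z_{ef} Z`. -/
noncomputable def Ray {m : ℕ} (e f : Fin m) (Z : MvPolynomial (Fin m) ℝ) : MvPolynomial (Fin m) ℝ :=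
  pderiv e Z * pderiv f Z - pderiv f (pderiv e Z) * Z

variable {m : ℕ}

lemma coeff_pderiv (e : Fin m) (Z : MvPolynomial (Fin m) ℝ) (d : Fin m →₀ ℕ) :
    coeff d (pderiv e Z) = (d e + 1 : ℝ) * coeff (d + Finsupp.single e 1) Z := by
  induction Z using MvPolynomial.induction_on' with
  | monomial s a =>
    rw [pderiv_monomial, coeff_monomial, coeff_monomial]
    by_cases h : s = d + Finsupp.single e 1
    · subst h
      have h1 : d + Finsupp.single e 1 - Finsupp.single e 1 = d := by
        ext i; simp [Finsupp.single_apply]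
      have h2 : ((d + Finsupp.single e 1 : Fin m →₀ ℕ)) e = d e + 1 := by
        simp
      rw [if_pos h1, if_pos rfl, h2]
      push_cast
      ring
    · rw [if_neg h]
      by_cases h2 : s - Finsupp.single e 1 = d
      · have hse : s e = 0 := by
          by_contra hse
          apply h
          rw [← h2]
          ext i
          by_cases hi : i = e
          · subst hi
            simp only [← h2, Finsupp.coe_tsub, Pi.sub_apply, Finsupp.add_apply,
              Finsupp.single_eq_same]
            omega
          · simp [Finsupp.single_apply, Ne.symm hi]
        rw [if_pos h2, hse]
        push_cast
        ring
      · rw [if_neg h2, mul_zero]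
  | add p q hp hq => simp [hp, hq]; ring

lemma del_monomial (e : Fin m) (s : Fin m →₀ ℕ) (a : ℝ) :
    del e (monomial s a) = if s e = 0 then monomial s a else 0 := by
  rw [del, aeval_monomial]
  by_cases h : s e = 0
  · rw [if_pos h]
    rw [monomial_eq]
    congr 1
    rw [Finsupp.prod, Finsupp.prod]
    refine Finset.prod_congr rfl fun i hi => ?_
    have : i ≠ e := fun he => by
      subst he; exact (Finsupp.mem_support_iff.mp hi) h
    rw [if_neg this]
  · rw [if_neg h]
    have he : e ∈ s.support := Finsupp.mem_support_iff.mpr h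
    rw [Finsupp.prod, Finset.prod_eq_zero he]
    · rw [mul_zero]
    · rw [if_pos rfl, zero_pow h]

lemma coeff_del (e : Fin m) (Z : MvPolynomial (Fin m) ℝ) (d : Fin m →₀ ℕ) :
    coeff d (del e Z) = if d e = 0 then coeff d Z else 0 := by
  induction Z using MvPolynomial.induction_on' with
  | monomial s a =>
    rw [del_monomial, coeff_monomial]
    by_cases hs : s e = 0
    · rw [if_pos hs, coeff_monomial]
      by_cases hsd : s = d
      · subst hsd; rw [if_pos rfl, if_pos hs]
      · rw [if_neg hsd]; split <;> simp
    · rw [if_neg hs, coeff_zero]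
      by_cases hd : d e = 0
      · rw [if_pos hd, if_neg (fun hsd => by subst hsd; exact hs hd)]
      · rw [if_neg hd]
  | add p q hp hq =>
    rw [del] at *
    rw [map_add, coeff_add, hp, hq, coeff_add]
    split <;> simp

lemma del_add (e : Fin m) (p q : MvPolynomial (Fin m) ℝ) :
    del e (p + q) = del e p + del e q := by rw [del, del, del, map_add]

/-- `P` does not involve variable `e` (support exponents vanish at `e`). -/
def Freev (e : Fin m) (P : MvPolynomial (Fin m) ℝ) : Prop :=
  ∀ d : Fin m →₀ ℕ, coeff d P ≠ 0 → d e = 0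

lemma freev_pderiv_self {e : Fin m} {Z : MvPolynomial (Fin m) ℝ} (h : Z.degreeOf e ≤ 1) :
    Freev e (pderiv e Z) := by
  intro d hd
  rw [coeff_pderiv] at hd
  have h2 : coeff (d + Finsupp.single e 1) Z ≠ 0 := fun h0 => hd (by rw [h0, mul_zero])
  have h3 := degreeOf_le_iff.mp h _ (Finsupp.mem_support_iff.mpr h2)
  have h4 : ((d + Finsupp.single e 1 : Fin m →₀ ℕ)) e = d e + 1 := by simp
  omega

lemma freev_pderiv {e f : Fin m} {Z : MvPolynomial (Fin m) ℝ} (h : Freev f Z) :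
    Freev f (pderiv e Z) := by
  intro d hd
  rw [coeff_pderiv] at hd
  have h2 : coeff (d + Finsupp.single e 1) Z ≠ 0 := fun h0 => hd (by rw [h0, mul_zero])
  have := h _ h2
  simp only [Finsupp.add_apply] at this
  omega

lemma freev_del_self (e : Fin m) (Z : MvPolynomial (Fin m) ℝ) : Freev e (del e Z) := by
  intro d hd
  rw [coeff_del] at hd
  by_contra h
  rw [if_neg h] at hd
  exact hd rfl

lemma freev_del {e f : Fin m} {Z : MvPolynomial (Fin m) ℝ} (h : Freev f Z) :
    Freev f (del e Z) := by
  intro d hd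
  rw [coeff_del] at hd
  split at hd
  · exact h _ hd
  · exact absurd rfl hd

lemma multiaffine_pderiv {e : Fin m} {Z : MvPolynomial (Fin m) ℝ} (h : Multiaffine Z) :
    Multiaffine (pderiv e Z) := by
  intro i
  rw [degreeOf_le_iff]
  intro d hd
  rw [MvPolynomial.mem_support_iff, coeff_pderiv] at hd
  have h2 : coeff (d + Finsupp.single e 1) Z ≠ 0 := fun h0 => hd (by rw [h0, mul_zero])
  have h3 := degreeOf_le_iff.mp (h i) _ (Finsupp.mem_support_iff.mpr h2)
  simp only [Finsupp.add_apply] at h3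
  omega

lemma multiaffine_del {e : Fin m} {Z : MvPolynomial (Fin m) ℝ} (h : Multiaffine Z) :
    Multiaffine (del e Z) := by
  intro i
  rw [degreeOf_le_iff]
  intro d hd
  rw [MvPolynomial.mem_support_iff, coeff_del] at hd
  split at hd
  · exact degreeOf_le_iff.mp (h i) _ (Finsupp.mem_support_iff.mpr hd)
  · exact absurd rfl hd

lemma pderiv_pderiv_comm (e f : Fin m) (Z : MvPolynomial (Fin m) ℝ) :
    pderiv e (pderiv f Z) = pderiv f (pderiv e Z) := by
  ext d
  rw [coeff_pderiv, coeff_pderiv, coeff_pderiv, coeff_pderiv]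
  have h1 : d + Finsupp.single e 1 + Finsupp.single f 1
      = d + Finsupp.single f 1 + Finsupp.single e 1 := by
    rw [add_assoc, add_assoc, add_comm (Finsupp.single e 1)]
  rw [h1]
  have h2 : ((d + Finsupp.single e 1 : Fin m →₀ ℕ)) f = d f + (Finsupp.single e 1 : Fin m →₀ ℕ) f := by simp
  have h3 : ((d + Finsupp.single f 1 : Fin m →₀ ℕ)) e = d e + (Finsupp.single f 1 : Fin m →₀ ℕ) e := by simp
  rw [h2, h3]
  by_cases hef : e = f
  · subst hef; ring
  · rw [Finsupp.single_apply, Finsupp.single_apply, if_neg hef, if_neg (Ne.symm hef)]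
    push_cast
    ring

lemma pderiv_del_comm {e f : Fin m} (h : e ≠ f) (Z : MvPolynomial (Fin m) ℝ) :
    pderiv e (del f Z) = del f (pderiv e Z) := by
  ext d
  rw [coeff_pderiv, coeff_del, coeff_del]
  have h2 : ((d + Finsupp.single e 1 : Fin m →₀ ℕ)) f = d f := by
    simp [Finsupp.single_apply, h]
  rw [h2]
  split
  · rw [coeff_pderiv]
  · rw [mul_zero]

lemma del_del_comm (e f : Fin m) (Z : MvPolynomial (Fin m) ℝ) :
    del e (del f Z) = del f (del e Z) := by
  ext d
  rw [coeff_del, coeff_del, coeff_del, coeff_del]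
  split <;> split <;> simp_all

/-- Decomposition `Z = X e * Z_e + Z^e` for multiaffine `Z`. -/
lemma decomp {e : Fin m} {Z : MvPolynomial (Fin m) ℝ} (h : Z.degreeOf e ≤ 1) :
    Z = X e * pderiv e Z + del e Z := by
  classical
  ext d
  rw [coeff_add, coeff_X_mul', coeff_del]
  by_cases hd : d e = 0
  · rw [if_neg (by simp [Finsupp.mem_support_iff, hd]), if_pos hd, zero_add]
  · rw [if_pos (by simp [Finsupp.mem_support_iff, hd]), if_neg hd, add_zero, coeff_pderiv]
    have h1 : d - Finsupp.single e 1 + Finsupp.single e 1 = d := by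
      ext i
      by_cases hi : i = e
      · subst hi
        simp only [Finsupp.add_apply, Finsupp.coe_tsub, Pi.sub_apply, Finsupp.single_eq_same]
        omega
      · simp [Finsupp.single_apply, Ne.symm hi]
    have h2 : ((d - Finsupp.single e 1 : Fin m →₀ ℕ)) e = d e - 1 := by simp
    rw [h1, h2]
    by_cases hc : coeff d Z = 0
    · rw [hc, mul_zero]
    · have h3 := degreeOf_le_iff.mp h _ (Finsupp.mem_support_iff.mpr hc)
      have h4 : d e = 1 := by omega
      rw [h4]
      norm_num

lemma eval_update_freev {e : Fin m} {P : MvPolynomial (Fin m) ℝ} (h : Freev e P)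
    (v : Fin m → ℝ) (s : ℝ) :
    eval (Function.update v e s) P = eval v P := by
  rw [eval_eq, eval_eq]
  refine Finset.sum_congr rfl fun d hd => ?_
  congr 1
  refine Finset.prod_congr rfl fun i hi => ?_
  have hie : i ≠ e := fun hie => by
    subst hie
    exact (Finsupp.mem_support_iff.mp hi) (h d (MvPolynomial.mem_support_iff.mp hd))
  rw [Function.update_of_ne hie]

lemma eval_update_expand {e : Fin m} {Z : MvPolynomial (Fin m) ℝ} (h : Z.degreeOf e ≤ 1)
    (v : Fin m → ℝ) (s : ℝ) :
    eval (Function.update v e s) Z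
      = s * eval v (pderiv e Z) + eval v (del e Z) := by
  conv_lhs => rw [decomp h]
  rw [map_add, map_mul, eval_X, Function.update_self,
    eval_update_freev (freev_pderiv_self h) v s,
    eval_update_freev (freev_del_self e Z) v s]

lemma eval_expand {e : Fin m} {Z : MvPolynomial (Fin m) ℝ} (h : Z.degreeOf e ≤ 1)
    (v : Fin m → ℝ) :
    eval v Z = v e * eval v (pderiv e Z) + eval v (del e Z) := by
  conv_lhs => rw [← Function.update_eq_self e v, eval_update_expand h v (v e)]

lemma rayval {P : MvPolynomial (Fin m) ℝ} (hP : Multiaffine P) (e g : Fin m) (heg : e ≠ g)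
    (x : Fin m → ℝ) :
    eval x (Ray e g P) =
      (x g * eval x (pderiv g (pderiv e P)) + eval x (del g (pderiv e P)))
        * (x e * eval x (pderiv g (pderiv e P)) + eval x (pderiv g (del e P)))
      - eval x (pderiv g (pderiv e P))
        * (x e * (x g * eval x (pderiv g (pderiv e P)) + eval x (del g (pderiv e P)))
            + (x g * eval x (pderiv g (del e P)) + eval x (del g (del e P)))) := by
  have hDe : eval x (pderiv e P) = x g * eval x (pderiv g (pderiv e P))
      + eval x (del g (pderiv e P)) := eval_expand ((multiaffine_pderiv hP) g) x
  have hEe : eval x (del e P) = x g * eval x (pderiv g (del e P))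
      + eval x (del g (del e P)) := eval_expand ((multiaffine_del hP) g) x
  have hDg : eval x (pderiv g P) = x e * eval x (pderiv g (pderiv e P))
      + eval x (pderiv g (del e P)) := by
    rw [eval_expand ((multiaffine_pderiv hP) e) x, pderiv_pderiv_comm,
      ← pderiv_del_comm (Ne.symm heg)]
  have hP0 : eval x P = x e * eval x (pderiv e P) + eval x (del e P) :=
    eval_expand (hP e) x
  simp only [Ray, map_sub, map_mul]
  rw [hDe, hDg, hP0, hDe, hEe]

lemma quad {Z : MvPolynomial (Fin m) ℝ} (hZ : Multiaffine Z) (e f g : Fin m)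
    (hef : e ≠ f) (heg : e ≠ g) (hfg : f ≠ g) (x : Fin m → ℝ) (s : ℝ) :
    eval (Function.update x f s) (Ray e g Z) =
      (s * (x g * eval x (pderiv g (pderiv e (pderiv f Z)))
              + eval x (del g (pderiv e (pderiv f Z))))
          + (x g * eval x (pderiv g (pderiv e (del f Z)))
              + eval x (del g (pderiv e (del f Z)))))
        * (s * (x e * eval x (pderiv g (pderiv e (pderiv f Z)))
              + eval x (pderiv g (del e (pderiv f Z))))
          + (x e * eval x (pderiv g (pderiv e (del f Z)))
              + eval x (pderiv g (del e (del f Z)))))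
      - (s * eval x (pderiv g (pderiv e (pderiv f Z)))
          + eval x (pderiv g (pderiv e (del f Z))))
        * (s * (x e * (x g * eval x (pderiv g (pderiv e (pderiv f Z)))
                  + eval x (del g (pderiv e (pderiv f Z))))
              + (x g * eval x (pderiv g (del e (pderiv f Z)))
                  + eval x (del g (del e (pderiv f Z)))))
          + (x e * (x g * eval x (pderiv g (pderiv e (del f Z)))
                  + eval x (del g (pderiv e (del f Z))))
              + (x g * eval x (pderiv g (del e (del f Z)))
                  + eval x (del g (del e (del f Z)))))) := by
  have hP : Multiaffine (pderiv f Z) := multiaffine_pderiv hZ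
  have hQ : Multiaffine (del f Z) := multiaffine_del hZ
  -- expansions at x
  have e1 : eval x (pderiv e (pderiv f Z)) = x g * eval x (pderiv g (pderiv e (pderiv f Z)))
      + eval x (del g (pderiv e (pderiv f Z))) := eval_expand ((multiaffine_pderiv hP) g) x
  have e2 : eval x (del e (pderiv f Z)) = x g * eval x (pderiv g (del e (pderiv f Z)))
      + eval x (del g (del e (pderiv f Z))) := eval_expand ((multiaffine_del hP) g) x
  have e3 : eval x (pderiv e (del f Z)) = x g * eval x (pderiv g (pderiv e (del f Z)))
      + eval x (del g (pderiv e (del f Z))) := eval_expand ((multiaffine_pderiv hQ) g) x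
  have e4 : eval x (del e (del f Z)) = x g * eval x (pderiv g (del e (del f Z)))
      + eval x (del g (del e (del f Z))) := eval_expand ((multiaffine_del hQ) g) x
  have e5 : eval x (pderiv f Z) = x e * (x g * eval x (pderiv g (pderiv e (pderiv f Z)))
      + eval x (del g (pderiv e (pderiv f Z)))) + (x g * eval x (pderiv g (del e (pderiv f Z)))
      + eval x (del g (del e (pderiv f Z)))) := by
    rw [eval_expand (hP e) x, e1, e2]
  have e6 : eval x (del f Z) = x e * (x g * eval x (pderiv g (pderiv e (del f Z)))
      + eval x (del g (pderiv e (del f Z)))) + (x g * eval x (pderiv g (del e (del f Z)))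
      + eval x (del g (del e (del f Z)))) := by
    rw [eval_expand (hQ e) x, e3, e4]
  have e7 : eval x (pderiv g (pderiv f Z)) = x e * eval x (pderiv g (pderiv e (pderiv f Z)))
      + eval x (pderiv g (del e (pderiv f Z))) := by
    rw [eval_expand ((multiaffine_pderiv hP) e) x, pderiv_pderiv_comm,
      ← pderiv_del_comm (Ne.symm heg)]
  have e8 : eval x (pderiv g (del f Z)) = x e * eval x (pderiv g (pderiv e (del f Z)))
      + eval x (pderiv g (del e (del f Z))) := by
    rw [eval_expand ((multiaffine_pderiv hQ) e) x, pderiv_pderiv_comm,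
      ← pderiv_del_comm (Ne.symm heg)]
  -- expansions at the update point
  have f1 : eval (Function.update x f s) Z = s * eval x (pderiv f Z) + eval x (del f Z) :=
    eval_update_expand (hZ f) x s
  have f2 : eval (Function.update x f s) (pderiv e Z)
      = s * eval x (pderiv e (pderiv f Z)) + eval x (pderiv e (del f Z)) := by
    rw [eval_update_expand ((multiaffine_pderiv hZ) f) x s, pderiv_pderiv_comm,
      ← pderiv_del_comm hef]
  have f3 : eval (Function.update x f s) (pderiv g Z)
      = s * eval x (pderiv g (pderiv f Z)) + eval x (pderiv g (del f Z)) := by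
    rw [eval_update_expand ((multiaffine_pderiv hZ) f) x s, pderiv_pderiv_comm,
      ← pderiv_del_comm (Ne.symm hfg)]
  have f4 : eval (Function.update x f s) (pderiv g (pderiv e Z))
      = s * eval x (pderiv g (pderiv e (pderiv f Z)))
        + eval x (pderiv g (pderiv e (del f Z))) := by
    rw [eval_update_expand ((multiaffine_pderiv (multiaffine_pderiv hZ)) f) x s,
      pderiv_pderiv_comm f g, pderiv_pderiv_comm f e,
      ← pderiv_del_comm (Ne.symm hfg), ← pderiv_del_comm hef]
  simp only [Ray, map_sub, map_mul]
  rw [f1, f2, f3, f4, e1, e3, e7, e8, e5, e6]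

lemma final_scalar (a b c d p q r w xe xf xg s : ℝ)
    (hA : 0 ≤ (xg*a+b)*(xe*a+c) - a*(xe*(xg*a+b)+(xg*c+d)))
    (hC : 0 ≤ (xg*p+q)*(xe*p+r) - p*(xe*(xg*p+q)+(xg*r+w)))
    (hq : ∀ t : ℝ, 0 ≤ (t*(xf*a+p)+(xf*b+q))*(t*(xe*a+c)+(xe*b+d))
        - (t*a+b)*(t*(xe*(xf*a+p)+(xf*c+r)) + (xe*(xf*b+q)+(xf*d+w)))) :
    0 ≤ (s*(xg*a+b)+(xg*p+q))*(s*(xe*a+c)+(xe*p+r))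
      - (s*a+p)*(s*(xe*(xg*a+b)+(xg*c+d)) + (xe*(xg*p+q)+(xg*r+w))) := by
  set A := (xg*a+b)*(xe*a+c) - a*(xe*(xg*a+b)+(xg*c+d)) with hA_def
  set C := (xg*p+q)*(xe*p+r) - p*(xe*(xg*p+q)+(xg*r+w)) with hC_def
  set B := (xg*a+b)*(xe*p+r) + (xg*p+q)*(xe*a+c)
      - a*(xe*(xg*p+q)+(xg*r+w)) - p*(xe*(xg*a+b)+(xg*c+d)) with hB_def
  have h1 : ∀ t : ℝ, 0 ≤
      ((xf*a+p)*(xe*a+c) - a*(xe*(xf*a+p)+(xf*c+r))) * (t*t)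
      + ((xf*a+p)*(xe*b+d) + (xf*b+q)*(xe*a+c)
          - a*(xe*(xf*b+q)+(xf*d+w)) - b*(xe*(xf*a+p)+(xf*c+r))) * t
      + ((xf*b+q)*(xe*b+d) - b*(xe*(xf*b+q)+(xf*d+w))) :=
    fun t => le_of_le_of_eq (hq t) (by ring)
  have hd := discrim_le_zero h1
  rw [discrim] at hd
  have key : B^2 - 4*A*C ≤ 0 := by
    have hident : B^2 - 4*A*C =
        ((xf*a+p)*(xe*b+d) + (xf*b+q)*(xe*a+c)
          - a*(xe*(xf*b+q)+(xf*d+w)) - b*(xe*(xf*a+p)+(xf*c+r))) ^ 2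
        - 4 * ((xf*a+p)*(xe*a+c) - a*(xe*(xf*a+p)+(xf*c+r)))
            * ((xf*b+q)*(xe*b+d) - b*(xe*(xf*b+q)+(xf*d+w))) := by
      rw [hA_def, hB_def, hC_def]; ring
    linarith [hd, hident.le, hident.ge]
  have hgoal : (s*(xg*a+b)+(xg*p+q))*(s*(xe*a+c)+(xe*p+r))
      - (s*a+p)*(s*(xe*(xg*a+b)+(xg*c+d)) + (xe*(xg*p+q)+(xg*r+w)))
      = A*s^2 + B*s + C := by
    rw [hA_def, hB_def, hC_def]; ring
  rw [hgoal]
  rcases eq_or_lt_of_le hA with h|h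
  · have hB2 : B^2 ≤ 0 := by nlinarith
    have hB0 : B = 0 := by nlinarith [sq_nonneg B]
    rw [← h, hB0]
    ring_nf
    linarith
  · nlinarith [sq_nonneg (2*A*s+B), key, hC, h]

theorem lemma_two {m : ℕ} (Z : MvPolynomial (Fin m) ℝ)
    (hZ : Multiaffine Z)
    (hpos : ∀ d, Z.coeff d ≠ 0 → 0 < Z.coeff d)
    (e f g : Fin m) (hef : e ≠ f) (heg : e ≠ g) (hfg : f ≠ g)
    (x : Fin m → ℝ)
    (hA : 0 ≤ eval x (Ray e g (pderiv f Z)))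
    (hC : 0 ≤ eval x (Ray e g (del f Z)))
    (hef' : ∀ t : ℝ, 0 ≤ eval (Function.update x g t) (Ray e f Z)) :
    ∀ s : ℝ, 0 ≤ eval (Function.update x f s) (Ray e g Z) := by
  -- word normalizations
  have W1 : pderiv f (pderiv e (pderiv g Z)) = pderiv g (pderiv e (pderiv f Z)) := by
    rw [pderiv_pderiv_comm e g, pderiv_pderiv_comm f g, pderiv_pderiv_comm f e]
  have W2 : pderiv f (pderiv e (del g Z)) = del g (pderiv e (pderiv f Z)) := by
    rw [pderiv_del_comm heg, pderiv_del_comm hfg, pderiv_pderiv_comm f e]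
  have W3 : pderiv f (del e (pderiv g Z)) = pderiv g (del e (pderiv f Z)) := by
    rw [← pderiv_del_comm (Ne.symm heg), pderiv_pderiv_comm f g,
      pderiv_del_comm (Ne.symm hef)]
  have W4 : pderiv f (del e (del g Z)) = del g (del e (pderiv f Z)) := by
    rw [pderiv_del_comm (Ne.symm hef), pderiv_del_comm hfg, del_del_comm e g]
  have W5 : del f (pderiv e (pderiv g Z)) = pderiv g (pderiv e (del f Z)) := by
    rw [pderiv_pderiv_comm e g, ← pderiv_del_comm (Ne.symm hfg), ← pderiv_del_comm hef]
  have W6 : del f (pderiv e (del g Z)) = del g (pderiv e (del f Z)) := by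
    rw [pderiv_del_comm heg, del_del_comm f g, ← pderiv_del_comm hef]
  have W7 : del f (del e (pderiv g Z)) = pderiv g (del e (del f Z)) := by
    rw [← pderiv_del_comm (Ne.symm heg), ← pderiv_del_comm (Ne.symm hfg), del_del_comm f e]
  have W8 : del f (del e (del g Z)) = del g (del e (del f Z)) := by
    rw [del_del_comm e g, del_del_comm f g, del_del_comm f e]
  rw [rayval (multiaffine_pderiv hZ) e g heg x] at hA
  rw [rayval (multiaffine_del hZ) e g heg x] at hC
  have hq : ∀ t : ℝ, 0 ≤
      (t*((x f)*(eval x (pderiv g (pderiv e (pderiv f Z))))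
            + (eval x (pderiv g (pderiv e (del f Z)))))
          + ((x f)*(eval x (del g (pderiv e (pderiv f Z))))
            + (eval x (del g (pderiv e (del f Z))))))
        * (t*((x e)*(eval x (pderiv g (pderiv e (pderiv f Z))))
            + (eval x (pderiv g (del e (pderiv f Z)))))
          + ((x e)*(eval x (del g (pderiv e (pderiv f Z))))
            + (eval x (del g (del e (pderiv f Z))))))
      - (t*(eval x (pderiv g (pderiv e (pderiv f Z))))
          + (eval x (del g (pderiv e (pderiv f Z)))))
        * (t*((x e)*((x f)*(eval x (pderiv g (pderiv e (pderiv f Z))))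
              + (eval x (pderiv g (pderiv e (del f Z)))))
            + ((x f)*(eval x (pderiv g (del e (pderiv f Z))))
              + (eval x (pderiv g (del e (del f Z))))))
          + ((x e)*((x f)*(eval x (del g (pderiv e (pderiv f Z))))
              + (eval x (del g (pderiv e (del f Z)))))
            + ((x f)*(eval x (del g (del e (pderiv f Z))))
              + (eval x (del g (del e (del f Z))))))) := by
    intro t
    have h := hef' t
    rw [quad hZ e g f heg hef (Ne.symm hfg) x t] at h
    rw [W1, W2, W3, W4, W5, W6, W7, W8] at h
    exact h
  intro s
  rw [quad hZ e f g hef heg hfg x s]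
  exact final_scalar
    (eval x (pderiv g (pderiv e (pderiv f Z))))
    (eval x (del g (pderiv e (pderiv f Z))))
    (eval x (pderiv g (del e (pderiv f Z))))
    (eval x (del g (del e (pderiv f Z))))
    (eval x (pderiv g (pderiv e (del f Z))))
    (eval x (del g (pderiv e (del f Z))))
    (eval x (pderiv g (del e (del f Z))))
    (eval x (del g (del e (del f Z))))
    (x e) (x f) (x g) s hA hC hq
end

section
/- Let Z be a multiaffine real polynomial with positive coefficients in y_1,...,y_m. Suppose that for every index e, both Z_e and Z^e have the strong Rayleigh property, and that for some fixed pair {e,f}, ΔZ{e,f} ≥ 0 for all real values of the remaining variables. Then Z has the strong Rayleigh property, i.e., ΔZ{g,h} ≥ 0 for all real values of the variables, for every pair of indices {g,h}. -/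
open MvPolynomial

/-- The strong Rayleigh property: all Rayleigh differences are nonnegative at all
real points. -/
def StrongRayleigh {m : ℕ} (Z : MvPolynomial (Fin m) ℝ) : Prop :=
  ∀ e f : Fin m, e ≠ f → ∀ y : Fin m → ℝ, 0 ≤ eval y (Ray e f Z)

/-! ### Auxiliary lemmas -/

variable {m : ℕ}

lemma pderiv_comm' (i j : Fin m) (W : MvPolynomial (Fin m) ℝ) :
    pderiv i (pderiv j W) = pderiv j (pderiv i W) := by
  induction W using MvPolynomial.induction_on with
  | C a => simp
  | add p q hp hq => simp [hp, hq]
  | mul_X p n ih =>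
    by_cases hni : n = i <;> by_cases hnj : n = j <;>
      simp [pderiv_mul, pderiv_X, hni, hnj, ih, Pi.single_apply] <;>
      split_ifs with h <;> simp [h, ih] <;> ring

lemma pderiv_del {i j : Fin m} (h : j ≠ i) (W : MvPolynomial (Fin m) ℝ) :
    pderiv j (del i W) = del i (pderiv j W) := by
  induction W using MvPolynomial.induction_on with
  | C a => simp [del]
  | add p q hp hq => simp [del, map_add] at *; simp [hp, hq]
  | mul_X p n ih =>
    simp only [del, map_mul, aeval_X] at *
    by_cases hni : n = i
    · subst hni
      simp [pderiv_mul, pderiv_X, ih, Pi.single_apply, h.symm]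
    · simp only [if_neg hni, pderiv_mul, pderiv_X, ih, map_add, map_mul, aeval_X]
      by_cases hnj : n = j <;> simp [hnj, Pi.single_apply, if_neg hni]

lemma eval_del (i : Fin m) (W : MvPolynomial (Fin m) ℝ) (w : Fin m → ℝ) :
    eval w (del i W) = eval (Function.update w i 0) W := by
  induction W using MvPolynomial.induction_on with
  | C a => simp [del]
  | add p q hp hq => simp [del, map_add] at *; simp [hp, hq]
  | mul_X p n ih =>
    simp only [del, map_mul, aeval_X, eval_mul, eval_X] at *
    rw [ih]
    by_cases hni : n = i <;> simp [hni, Function.update]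

lemma degreeOf_monomial_le' (j : Fin m) (s : Fin m →₀ ℕ) (c : ℝ) :
    degreeOf j (monomial s c) ≤ s j := by
  rw [degreeOf_le_iff]
  intro md hmd
  have := support_monomial_subset hmd
  simp only [Finset.mem_singleton] at this
  subst this; exact le_rfl

lemma pderiv_eq_zero_of_degreeOf (i : Fin m) (W : MvPolynomial (Fin m) ℝ)
    (h : degreeOf i W = 0) : pderiv i W = 0 := by
  apply pderiv_eq_zero_of_notMem_vars
  intro hv
  rw [mem_vars] at hv
  obtain ⟨d, hd, hi⟩ := hv
  have h1 := monomial_le_degreeOf i hd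
  have h2 : d i ≠ 0 := Finsupp.mem_support_iff.mp hi
  omega

lemma degreeOf_pderiv_self (i : Fin m) (W : MvPolynomial (Fin m) ℝ)
    (h : degreeOf i W ≤ 1) : degreeOf i (pderiv i W) = 0 := by
  refine Nat.le_zero.mp ?_
  conv_lhs => rw [W.as_sum]
  rw [map_sum]
  refine le_trans (degreeOf_sum_le _ _ _) (Finset.sup_le fun d hd => ?_)
  rw [pderiv_monomial]
  refine le_trans (degreeOf_monomial_le' _ _ _) ?_
  have h1 := monomial_le_degreeOf i hd
  simp [Finsupp.tsub_apply, Finsupp.single_eq_same]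
  omega

lemma degreeOf_pderiv_le {i j : Fin m} (h : j ≠ i) (W : MvPolynomial (Fin m) ℝ) :
    degreeOf j (pderiv i W) ≤ degreeOf j W := by
  conv_lhs => rw [W.as_sum]
  rw [map_sum]
  refine le_trans (degreeOf_sum_le _ _ _) (Finset.sup_le fun d hd => ?_)
  rw [pderiv_monomial]
  refine le_trans (degreeOf_monomial_le' _ _ _) ?_
  have h1 := monomial_le_degreeOf j hd
  rw [Finsupp.tsub_apply, Finsupp.single_eq_of_ne' (Ne.symm h)]
  omega

lemma eval_affine_monomial (i : Fin m) (d : Fin m →₀ ℕ) (c : ℝ) (hd : d i ≤ 1)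
    (w : Fin m → ℝ) (t : ℝ) :
    eval (Function.update w i t) (monomial d c) =
      eval (Function.update w i 0) (monomial d c)
        + t * eval (Function.update w i 0) (pderiv i (monomial d c)) := by
  rcases Nat.le_one_iff_eq_zero_or_eq_one.mp hd with h0 | h1
  · have hns : i ∉ d.support := by simp [Finsupp.mem_support_iff, h0]
    have key : ∀ s : ℝ, eval (Function.update w i s) (monomial d c) = eval w (monomial d c) := by
      intro s
      simp only [eval_monomial, Finsupp.prod]
      congr 1
      refine Finset.prod_congr rfl fun j hj => ?_
      have : j ≠ i := fun h => hns (h ▸ hj)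
      rw [Function.update_of_ne this]
    rw [key, key, pderiv_monomial, h0, Nat.cast_zero, mul_zero, map_zero, map_zero,
      mul_zero, add_zero]
  · have his : i ∈ d.support := by simp [Finsupp.mem_support_iff, h1]
    have hval : ∀ j, j ≠ i → ((d - Finsupp.single i 1) : Fin m →₀ ℕ) j = d j := by
      intro j hj
      rw [Finsupp.tsub_apply, Finsupp.single_eq_of_ne' (Ne.symm hj)]
      omega
    have hsupp : ((d - Finsupp.single i 1) : Fin m →₀ ℕ).support = d.support.erase i := by
      ext j
      rcases eq_or_ne j i with hj | hj
      · subst hj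
        simp [Finsupp.mem_support_iff, Finsupp.tsub_apply, Finsupp.single_eq_same, h1]
      · simp [Finsupp.mem_support_iff, hval j hj, hj]
    have hP : ∀ s : ℝ, eval (Function.update w i s) (monomial d c)
        = c * s * ∏ j ∈ d.support.erase i, w j ^ d j := by
      intro s
      rw [eval_monomial, Finsupp.prod, ← Finset.mul_prod_erase _ _ his]
      rw [Function.update_self, h1, pow_one]
      rw [Finset.prod_congr rfl fun j hj => by
        rw [Function.update_of_ne (Finset.ne_of_mem_erase hj)]]
      ring
    have hderiv : eval (Function.update w i 0) (pderiv i (monomial d c))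
        = c * ∏ j ∈ d.support.erase i, w j ^ d j := by
      rw [pderiv_monomial, h1, Nat.cast_one, mul_one, eval_monomial, Finsupp.prod, hsupp]
      congr 1
      refine Finset.prod_congr rfl fun j hj => ?_
      rw [Function.update_of_ne (Finset.ne_of_mem_erase hj), hval j (Finset.ne_of_mem_erase hj)]
    rw [hP, hP, hderiv]
    ring

lemma eval_affine (i : Fin m) (W : MvPolynomial (Fin m) ℝ) (hW : degreeOf i W ≤ 1)
    (w : Fin m → ℝ) (t : ℝ) :
    eval (Function.update w i t) W =
      eval (Function.update w i 0) W + t * eval (Function.update w i 0) (pderiv i W) := by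
  conv_lhs => rw [W.as_sum]
  conv_rhs => rw [W.as_sum]
  rw [map_sum, map_sum, map_sum, map_sum, Finset.mul_sum, ← Finset.sum_add_distrib]
  refine Finset.sum_congr rfl fun d hd => ?_
  exact eval_affine_monomial i d _ (le_trans (monomial_le_degreeOf i hd) hW) w t

lemma eval_affine' (i : Fin m) (W : MvPolynomial (Fin m) ℝ) (hW : degreeOf i W ≤ 1)
    (w : Fin m → ℝ) :
    eval w W = eval (Function.update w i 0) W
      + w i * eval (Function.update w i 0) (pderiv i W) := by
  have := eval_affine i W hW w (w i)
  rwa [Function.update_eq_self] at this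

lemma eval_indep (i : Fin m) (W : MvPolynomial (Fin m) ℝ) (h : degreeOf i W = 0)
    (w : Fin m → ℝ) (t : ℝ) :
    eval (Function.update w i t) W = eval w W := by
  have h0 : pderiv i W = 0 := pderiv_eq_zero_of_degreeOf i W h
  have h1 := eval_affine i W (by omega) w t
  have h2 := eval_affine' i W (by omega) w
  rw [h0] at h1 h2
  simp only [map_zero, mul_zero, add_zero] at h1 h2
  rw [h1, h2]

lemma Ray_comm (b c : Fin m) (Z : MvPolynomial (Fin m) ℝ) : Ray b c Z = Ray c b Z := by
  simp only [Ray]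
  rw [pderiv_comm' c b]
  ring

lemma eval_Ray {b c : Fin m} (hbc : b ≠ c) (W : MvPolynomial (Fin m) ℝ)
    (hb : degreeOf b W ≤ 1) (hc : degreeOf c W ≤ 1) (w : Fin m → ℝ) :
    eval w (Ray b c W) =
      eval (Function.update (Function.update w b 0) c 0) (pderiv b W)
          * eval (Function.update (Function.update w b 0) c 0) (pderiv c W)
        - eval (Function.update (Function.update w b 0) c 0) (pderiv c (pderiv b W))
          * eval (Function.update (Function.update w b 0) c 0) W := by
  set w₀ := Function.update (Function.update w b 0) c 0 with hw₀
  have hBb : degreeOf b (pderiv b W) = 0 := degreeOf_pderiv_self b W hb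
  have hCc : degreeOf c (pderiv c W) = 0 := degreeOf_pderiv_self c W hc
  have hBc : degreeOf c (pderiv b W) ≤ 1 := le_trans (degreeOf_pderiv_le (Ne.symm hbc) W) hc
  have hCb : degreeOf b (pderiv c W) ≤ 1 := le_trans (degreeOf_pderiv_le hbc W) hb
  have hDb : degreeOf b (pderiv c (pderiv b W)) = 0 :=
    Nat.le_zero.mp (le_trans (degreeOf_pderiv_le hbc _) (le_of_eq hBb))
  have hDc : degreeOf c (pderiv c (pderiv b W)) = 0 := degreeOf_pderiv_self c _ hBc
  have hcomm : Function.update (Function.update w c 0) b 0 = w₀ := by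
    rw [hw₀, Function.update_comm (Ne.symm hbc)]
  -- eval w W
  have e1 : eval w W = eval (Function.update w b 0) W
      + w b * eval (Function.update w b 0) (pderiv b W) := eval_affine' b W hb w
  have e2 : eval (Function.update w b 0) W = eval w₀ W + w c * eval w₀ (pderiv c W) := by
    have := eval_affine' c W hc (Function.update w b 0)
    rwa [Function.update_of_ne (Ne.symm hbc)] at this
  have e3 : eval (Function.update w b 0) (pderiv b W)
      = eval w₀ (pderiv b W) + w c * eval w₀ (pderiv c (pderiv b W)) := by
    have := eval_affine' c (pderiv b W) hBc (Function.update w b 0)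
    rwa [Function.update_of_ne (Ne.symm hbc)] at this
  have e4 : eval w (pderiv b W) = eval (Function.update w b 0) (pderiv b W) :=
    (eval_indep b _ hBb w 0).symm
  have e5 : eval w (pderiv c W) = eval (Function.update w c 0) (pderiv c W) :=
    (eval_indep c _ hCc w 0).symm
  have e6 : eval (Function.update w c 0) (pderiv c W)
      = eval w₀ (pderiv c W) + w b * eval w₀ (pderiv b (pderiv c W)) := by
    have := eval_affine' b (pderiv c W) hCb (Function.update w c 0)
    rwa [Function.update_of_ne hbc, hcomm] at this
  have e7 : pderiv b (pderiv c W) = pderiv c (pderiv b W) := pderiv_comm' b c W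
  have e8 : eval w (pderiv c (pderiv b W)) = eval w₀ (pderiv c (pderiv b W)) := by
    rw [hw₀, eval_indep c _ hDc, eval_indep b _ hDb]
  simp only [Ray, map_sub, map_mul]
  rw [e1, e2, e3, e4, e3, e5, e6, e7, e8]
  ring

lemma quad_nonneg {A B C : ℝ} (hA : 0 ≤ A) (hC : 0 ≤ C) (hD : B ^ 2 - 4 * A * C ≤ 0)
    (t : ℝ) : 0 ≤ A * t ^ 2 + B * t + C := by
  rcases hA.eq_or_lt with h | h
  · have hB2 : B ^ 2 = 0 := le_antisymm (by nlinarith) (sq_nonneg B)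
    have hB : B = 0 := by
      have := sq_eq_zero_iff.mp hB2
      exact this
    rw [← h, hB]
    simpa using hC
  · nlinarith [sq_nonneg (2 * A * t + B)]

lemma step {Z : MvPolynomial (Fin m) ℝ} (hZ : Multiaffine Z)
    (hm : ∀ e : Fin m, StrongRayleigh (pderiv e Z) ∧ StrongRayleigh (del e Z))
    {a b c : Fin m} (hab : a ≠ b) (hac : a ≠ c) (hbc : b ≠ c)
    (h1 : ∀ y : Fin m → ℝ, 0 ≤ eval y (Ray a b Z)) :
    ∀ y : Fin m → ℝ, 0 ≤ eval y (Ray b c Z) := by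
  intro y
  set y0 : Fin m → ℝ :=
    Function.update (Function.update (Function.update y a 0) b 0) c 0 with hy0
  set s0 := eval y0 Z with hs0
  set sa := eval y0 (pderiv a Z) with hsa
  set sb := eval y0 (pderiv b Z) with hsb
  set sc := eval y0 (pderiv c Z) with hsc
  set sab := eval y0 (pderiv a (pderiv b Z)) with hsab
  set sac := eval y0 (pderiv a (pderiv c Z)) with hsac
  set sbc := eval y0 (pderiv c (pderiv b Z)) with hsbc
  set sabc := eval y0 (pderiv a (pderiv c (pderiv b Z))) with hsabc
  -- degree facts
  have dB : degreeOf a (pderiv b Z) ≤ 1 := le_trans (degreeOf_pderiv_le hab Z) (hZ a)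
  have dC : degreeOf a (pderiv c Z) ≤ 1 := le_trans (degreeOf_pderiv_le hac Z) (hZ a)
  have dD : degreeOf a (pderiv c (pderiv b Z)) ≤ 1 := le_trans (degreeOf_pderiv_le hac _) dB
  have dcA : degreeOf c (pderiv a Z) ≤ 1 := le_trans (degreeOf_pderiv_le (Ne.symm hac) Z) (hZ c)
  have dcB : degreeOf c (pderiv b Z) ≤ 1 := le_trans (degreeOf_pderiv_le (Ne.symm hbc) Z) (hZ c)
  have dcD : degreeOf c (pderiv b (pderiv a Z)) ≤ 1 := le_trans (degreeOf_pderiv_le (Ne.symm hbc) _) dcA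
  have dbA : degreeOf b (pderiv a Z) ≤ 1 := le_trans (degreeOf_pderiv_le (Ne.symm hab) Z) (hZ b)
  -- the quadratic in the `a`-coordinate
  have Q : ∀ t : ℝ, eval (Function.update y a t) (Ray b c Z)
      = (sb + sab * t) * (sc + sac * t) - (sbc + sabc * t) * (s0 + sa * t) := by
    intro t
    rw [eval_Ray hbc Z (hZ b) (hZ c) (Function.update y a t)]
    have hw : Function.update (Function.update (Function.update y a t) b 0) c 0
        = Function.update (Function.update (Function.update y b 0) c 0) a t := by
      rw [Function.update_comm hab, Function.update_comm hac]
    have hz : Function.update (Function.update (Function.update y b 0) c 0) a 0 = y0 := by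
      rw [hy0, Function.update_comm (Ne.symm hac), Function.update_comm (Ne.symm hab)]
    rw [hw, eval_affine a _ (hZ a) _ t, eval_affine a _ dB _ t, eval_affine a _ dC _ t,
      eval_affine a _ dD _ t, hz]
    rw [← hs0, ← hsa, ← hsb, ← hsc, ← hsab, ← hsac, ← hsbc, ← hsabc]
    ring
  -- the quadratic in the `c`-coordinate for the pair (a,b)
  have Qt : ∀ v : ℝ, eval (Function.update y c v) (Ray a b Z)
      = (sa + sac * v) * (sb + sbc * v) - (sab + sabc * v) * (s0 + sc * v) := by
    intro v
    rw [eval_Ray hab Z (hZ a) (hZ b) (Function.update y c v)]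
    have hw : Function.update (Function.update (Function.update y c v) a 0) b 0
        = Function.update (Function.update (Function.update y a 0) b 0) c v := by
      rw [Function.update_comm (Ne.symm hac), Function.update_comm (Ne.symm hbc)]
    have hz : Function.update (Function.update (Function.update y a 0) b 0) c 0 = y0 := rfl
    rw [hw, eval_affine c _ (hZ c) _ v, eval_affine c _ dcA _ v, eval_affine c _ dcB _ v,
      eval_affine c _ dcD _ v, hz]
    rw [pderiv_comm' c a Z, pderiv_comm' b a Z, pderiv_comm' c a (pderiv b Z)]
    rw [← hs0, ← hsa, ← hsb, ← hsc, ← hsab, ← hsac, ← hsbc, ← hsabc]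
    ring
  -- coordinates of y0 vanish at a, b, c
  have hy0a : y0 a = 0 := by
    rw [hy0, Function.update_of_ne hac, Function.update_of_ne hab, Function.update_self]
  have hy0b : y0 b = 0 := by
    rw [hy0, Function.update_of_ne hbc, Function.update_self]
  have hy0c : y0 c = 0 := by rw [hy0, Function.update_self]
  have hupa : Function.update y0 a 0 = y0 := by
    conv_rhs => rw [← Function.update_eq_self a y0]
    rw [hy0a]
  have hupb : Function.update y0 b 0 = y0 := by
    conv_rhs => rw [← Function.update_eq_self b y0]
    rw [hy0b]
  have hupc : Function.update y0 c 0 = y0 := by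
    conv_rhs => rw [← Function.update_eq_self c y0]
    rw [hy0c]
  -- leading coefficient is nonnegative
  have hα : 0 ≤ sab * sac - sabc * sa := by
    have h := (hm a).1 b c hbc y0
    rw [eval_Ray hbc _ dbA dcA y0, hupb, hupc] at h
    rw [pderiv_comm' b a Z, pderiv_comm' c a Z, pderiv_comm' c a (pderiv b Z)] at h
    rw [← hsa, ← hsab, ← hsac, ← hsabc] at h
    exact h
  -- constant coefficient is nonnegative
  have hγ : 0 ≤ sb * sc - sbc * s0 := by
    have h := (hm a).2 b c hbc y0
    have hdel : Ray b c (del a Z) = del a (Ray b c Z) := by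
      simp only [Ray]
      rw [pderiv_del (Ne.symm hab), pderiv_del (Ne.symm hac), pderiv_del (Ne.symm hac)]
      simp only [del, ← map_mul, ← map_sub]
    rw [hdel, eval_del, hupa, eval_Ray hbc Z (hZ b) (hZ c) y0, hupb, hupc] at h
    rw [← hs0, ← hsb, ← hsc, ← hsbc] at h
    exact h
  -- discriminant of the (a,b)-quadratic is nonpositive
  have hd2 : discrim (sac * sbc - sabc * sc) (sa * sbc + sb * sac - sab * sc - s0 * sabc)
      (sa * sb - sab * s0) ≤ 0 := by
    apply discrim_le_zero
    intro v
    have h := h1 (Function.update y c v)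
    rw [Qt v] at h
    nlinarith [h]
  have hdisc : (sb * sac + sc * sab - sbc * sa - s0 * sabc) ^ 2
      - 4 * (sab * sac - sabc * sa) * (sb * sc - sbc * s0) ≤ 0 := by
    rw [discrim] at hd2
    nlinarith [hd2]
  -- conclude
  have hq := Q (y a)
  rw [Function.update_eq_self a y] at hq
  rw [hq]
  have := quad_nonneg hα hγ hdisc (y a)
  nlinarith [this]

theorem theorem_three_c_implies_b {m : ℕ} (Z : MvPolynomial (Fin m) ℝ)
    (hZ : Multiaffine Z)
    (hpos : ∀ d, Z.coeff d ≠ 0 → 0 < Z.coeff d)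
    (hminors : ∀ e : Fin m, StrongRayleigh (pderiv e Z) ∧ StrongRayleigh (del e Z))
    (e f : Fin m) (hef : e ≠ f)
    (hΔ : ∀ y : Fin m → ℝ, 0 ≤ eval y (Ray e f Z)) :
    StrongRayleigh Z := by
  intro g h hgh y
  rcases eq_or_ne g e with hge | hge
  · subst hge
    rcases eq_or_ne h f with hhf | hhf
    · subst hhf; exact hΔ y
    · exact step hZ hminors (Ne.symm hef) (Ne.symm hhf) hgh
        (fun y => by rw [Ray_comm]; exact hΔ y) y
  · rcases eq_or_ne h e with hhe | hhe
    · subst hhe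
      rw [Ray_comm]
      rcases eq_or_ne g f with hgf | hgf
      · subst hgf; exact hΔ y
      · exact step hZ hminors (Ne.symm hef) (Ne.symm hgf) (Ne.symm hgh)
          (fun y => by rw [Ray_comm]; exact hΔ y) y
    · have hEg : ∀ y : Fin m → ℝ, 0 ≤ eval y (Ray e g Z) := by
        rcases eq_or_ne g f with hgf | hgf
        · subst hgf; exact hΔ
        · exact step hZ hminors (Ne.symm hef) (Ne.symm hgf) (Ne.symm hge)
            (fun y => by rw [Ray_comm]; exact hΔ y)
      exact step hZ hminors (Ne.symm hge) (Ne.symm hhe) hgh hEg y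
end
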